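/- arXiv:2601.11294 — 5 statements merged into one kernel-verified Lean document; each statement's English description precedes it below -/
import Mathlib

section
/- The set 𝒩(ℝ^d) of all finite Borel measures on ℝ^d of the form Σ_{j=1}^m δ_{x_j}, with m ∈ ℕ and x_1, …, x_m ∈ ℝ^d, is closed in the space of finite Borel measures on ℝ^d equipped with the weak topology. -/
open MeasureTheory

noncomputable section

/-- The Dirac mass at a point, as a finite measure. -/
def diracFM {X : Type*} [MeasurableSpace X] (x : X) : FiniteMeasure X :=
  ⟨Measure.dirac x, inferInstance⟩

open BoundedContinuousFunction Metric Filter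
open scoped NNReal ENNReal Topology

section Aux

set_option linter.unusedSectionVars false

variable {X : Type*} [MeasurableSpace X] [TopologicalSpace X] [OpensMeasurableSpace X]
  [MeasurableSingletonClass X]

lemma toMeasure_sum_dirac {m : ℕ} (x : Fin m → X) :
    ((∑ j, diracFM (x j) : FiniteMeasure X) : Measure X) = ∑ j, Measure.dirac (x j) :=
  map_sum FiniteMeasure.toMeasureAddMonoidHom (fun j => diracFM (x j)) Finset.univ

lemma testAgainstNN_sum_dirac {m : ℕ} (x : Fin m → X) (f : X →ᵇ ℝ≥0) :
    (∑ j, diracFM (x j)).testAgainstNN f = ∑ j, f (x j) := by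
  rw [FiniteMeasure.testAgainstNN, toMeasure_sum_dirac]
  rw [lintegral_finset_sum_measure]
  simp only [lintegral_dirac]
  rw [← ENNReal.coe_finset_sum, ENNReal.toNNReal_coe]

lemma mass_sum_dirac {m : ℕ} (x : Fin m → X) :
    (∑ j, diracFM (x j)).mass = m := by
  rw [← FiniteMeasure.testAgainstNN_one, testAgainstNN_sum_dirac]
  simp

lemma continuous_sum_dirac (m : ℕ) :
    Continuous (fun x : Fin m → X => ∑ j, diracFM (x j)) := by
  apply continuous_induced_rng.2
  apply WeakBilin.continuous_of_continuous_eval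
  intro f
  have key : ∀ x : Fin m → X,
      ((topDualPairing ℝ≥0 (X →ᵇ ℝ≥0))
        ((FiniteMeasure.toWeakDualBCNN ∘ fun x : Fin m → X => ∑ j, diracFM (x j)) x)) f
        = ∑ j, f (x j) := fun x => by
    simp only [Function.comp_apply]
    exact testAgainstNN_sum_dirac x f
  simp only [key]
  exact continuous_finset_sum _ fun j _ => f.continuous.comp (continuous_apply j)

end Aux

section Cutoff

set_option linter.unusedSectionVars false

variable {E : Type*} [NormedAddCommGroup E]

/-- A cutoff function: `1` on `closedBall 0 R`, vanishing outside `ball 0 (R+1)`,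
with values in `[0,1]`. -/
def cutoff (R : ℝ) : E →ᵇ ℝ≥0 :=
  ⟨⟨fun x => 1 - min 1 (Real.toNNReal (‖x‖ - R)),
    by
      apply Continuous.sub continuous_const
      exact (continuous_const.min (continuous_real_toNNReal.comp
        (continuous_norm.sub continuous_const)))⟩,
    ⟨1, fun x y => by
      have hx : (fun x : E => 1 - min 1 (Real.toNNReal (‖x‖ - R))) x ≤ 1 := tsub_le_self
      have hy : (fun x : E => 1 - min 1 (Real.toNNReal (‖x‖ - R))) y ≤ 1 := tsub_le_self
      rw [NNReal.dist_eq, abs_sub_le_iff]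
      constructor
      · have := (NNReal.coe_le_coe.2 hx)
        simp only [NNReal.coe_one] at this
        nlinarith [NNReal.coe_nonneg ((fun x : E => 1 - min 1 (Real.toNNReal (‖x‖ - R))) y)]
      · have := (NNReal.coe_le_coe.2 hy)
        simp only [NNReal.coe_one] at this
        nlinarith [NNReal.coe_nonneg ((fun x : E => 1 - min 1 (Real.toNNReal (‖x‖ - R))) x)]⟩⟩

lemma cutoff_apply (R : ℝ) (x : E) :
    cutoff R x = 1 - min 1 (Real.toNNReal (‖x‖ - R)) := rfl

lemma cutoff_le_one (R : ℝ) (x : E) : cutoff R x ≤ 1 := tsub_le_self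

lemma cutoff_eq_one (R : ℝ) {x : E} (hx : ‖x‖ ≤ R) : cutoff R x = 1 := by
  have h0 : Real.toNNReal (‖x‖ - R) = 0 := Real.toNNReal_of_nonpos (by linarith)
  rw [cutoff_apply, h0]
  simp

lemma norm_lt_of_cutoff_ne_zero (R : ℝ) {x : E} (hx : cutoff R x ≠ 0) : ‖x‖ < R + 1 := by
  by_contra h
  push_neg at h
  apply hx
  have h1 : (1 : ℝ≥0) ≤ Real.toNNReal (‖x‖ - R) := by
    rw [← Real.toNNReal_one]
    exact Real.toNNReal_mono (by linarith)
  rw [cutoff_apply, min_eq_left h1]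
  simp

variable [MeasurableSpace E] [BorelSpace E]

lemma apply_le_testAgainstNN_cutoff (μ : FiniteMeasure E) (R : ℝ) :
    μ (closedBall 0 R) ≤ μ.testAgainstNN (cutoff R) := by
  rw [← ENNReal.coe_le_coe, FiniteMeasure.ennreal_coeFn_eq_coeFn_toMeasure,
    FiniteMeasure.testAgainstNN_coe_eq,
    ← MeasureTheory.lintegral_indicator_one measurableSet_closedBall]
  apply lintegral_mono
  intro x
  by_cases hx : x ∈ closedBall (0 : E) R
  · rw [Set.indicator_of_mem hx]
    have h1 : cutoff R x = 1 :=
      cutoff_eq_one R (by simpa [mem_closedBall, dist_zero_right] using hx)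
    simp [h1]
  · simp [Set.indicator_of_notMem hx]

lemma exists_radius (μ : FiniteMeasure E) :
    ∃ R : ℝ, 0 ≤ R ∧ (μ.mass : ℝ) - 1/2 < (μ (closedBall 0 R) : ℝ) := by
  have hmono : Monotone (fun n : ℕ => closedBall (0 : E) n) := fun a b hab =>
    closedBall_subset_closedBall (by exact_mod_cast hab)
  have hU : (⋃ n : ℕ, closedBall (0 : E) n) = Set.univ := by
    ext x
    simp only [Set.mem_iUnion, Set.mem_univ, iff_true, mem_closedBall, dist_zero_right]
    obtain ⟨n, hn⟩ := exists_nat_ge ‖x‖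
    exact ⟨n, hn⟩
  have h1 : Tendsto (fun n : ℕ => (μ : Measure E) (closedBall 0 n)) atTop
      (𝓝 ((μ : Measure E) Set.univ)) := by
    have := tendsto_measure_iUnion_atTop (μ := (μ : Measure E)) hmono
    rwa [hU] at this
  have h2 : Tendsto (fun n : ℕ => ((μ : Measure E) (closedBall 0 n)).toReal) atTop
      (𝓝 (((μ : Measure E) Set.univ).toReal)) :=
    (ENNReal.tendsto_toReal (measure_ne_top _ _)).comp h1
  have hmass : ((μ : Measure E) Set.univ).toReal = (μ.mass : ℝ) := by
    rw [FiniteMeasure.mass]; rfl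
  rw [hmass] at h2
  have hev : ∀ᶠ n : ℕ in atTop,
      (μ.mass : ℝ) - 1/2 < ((μ : Measure E) (closedBall 0 n)).toReal :=
    h2.eventually (eventually_gt_nhds (by linarith [NNReal.coe_nonneg μ.mass]))
  obtain ⟨n, hn⟩ := hev.exists
  exact ⟨n, Nat.cast_nonneg n, hn⟩

end Cutoff

/-- The set `𝒩(ℝ^d)` of finite Borel measures on `ℝ^d` of the form
`Σ_{j=1}^m δ_{x_j}` is closed in the space of finite Borel measures equipped with
the weak topology. -/
theorem atomic_measures_isClosed (d : ℕ) :
    IsClosed {μ : FiniteMeasure (EuclideanSpace ℝ (Fin d)) |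
      ∃ (m : ℕ) (x : Fin m → EuclideanSpace ℝ (Fin d)), μ = ∑ j, diracFM (x j)} := by
  set E := EuclideanSpace ℝ (Fin d)
  set N : Set (FiniteMeasure E) :=
    {μ : FiniteMeasure E | ∃ (m : ℕ) (x : Fin m → E), μ = ∑ j, diracFM (x j)} with hNdef
  apply isClosed_of_closure_subset
  intro μ hμ
  set a : ℝ := (μ.mass : ℝ) with ha
  -- the open neighborhood controlling the mass
  have hcm : Continuous fun ν : FiniteMeasure E => (ν.mass : ℝ) :=
    NNReal.continuous_coe.comp FiniteMeasure.continuous_mass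
  set V0 : Set (FiniteMeasure E) :=
    (fun ν : FiniteMeasure E => (ν.mass : ℝ)) ⁻¹' (ball a (1/2)) with hV0def
  have hV0open : IsOpen V0 := isOpen_ball.preimage hcm
  have hμV0 : μ ∈ V0 := by
    simp only [hV0def, Set.mem_preimage, ← ha]
    exact mem_ball_self (by norm_num)
  -- pick an atomic measure near μ to fix the number of atoms m
  obtain ⟨ν0, hν0V, hν0N⟩ := _root_.mem_closure_iff.1 hμ V0 hV0open hμV0
  obtain ⟨m, y, rfl⟩ := hν0N
  have hm : |(m : ℝ) - a| < 1/2 := by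
    have h := hν0V
    simp only [hV0def, Set.mem_preimage, mass_sum_dirac, mem_ball, Real.dist_eq] at h
    exact_mod_cast h
  have hma : (m : ℝ) - 1/2 < a ∧ a < (m : ℝ) + 1/2 := by
    rw [abs_lt] at hm; constructor <;> linarith [hm.1, hm.2]
  -- the cutoff function
  obtain ⟨R, hR0, hRμ⟩ := exists_radius μ
  set f : E →ᵇ ℝ≥0 := cutoff R with hfdef
  have hμf : a - 1/2 < (μ.testAgainstNN f : ℝ) :=
    lt_of_lt_of_le hRμ (by exact_mod_cast apply_le_testAgainstNN_cutoff μ R)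
  set V1 : Set (FiniteMeasure E) :=
    (fun ν : FiniteMeasure E => (ν.testAgainstNN f : ℝ)) ⁻¹' (Set.Ioi (a - 1/2)) with hV1def
  have hV1open : IsOpen V1 := isOpen_Ioi.preimage
    (NNReal.continuous_coe.comp (FiniteMeasure.continuous_testAgainstNN_eval f))
  have hμV1 : μ ∈ V1 := hμf
  -- the compact set of candidate atomic measures
  set K : Set E := closedBall (0 : E) (R + 1) with hKdef
  set Φ : (Fin m → E) → FiniteMeasure E := fun x => ∑ j, diracFM (x j) with hΦdef
  set T : Set (FiniteMeasure E) := Φ '' (Set.univ.pi fun _ : Fin m => K) with hTdef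
  have hTcompact : IsCompact T :=
    (isCompact_univ_pi fun _ => isCompact_closedBall _ _).image (continuous_sum_dirac m)
  -- all atomic measures in V0 ∩ V1 lie in T
  have hsub : N ∩ (V0 ∩ V1) ⊆ T := by
    rintro ν ⟨⟨m', x, rfl⟩, hv0, hv1⟩
    have hm' : |(m' : ℝ) - a| < 1/2 := by
      simp only [hV0def, Set.mem_preimage, mass_sum_dirac, mem_ball, Real.dist_eq] at hv0
      exact_mod_cast hv0
    have hmm : m' = m := by
      by_contra hne
      have h2 : (m' - m : ℤ) ≠ 0 := sub_ne_zero.2 (by exact_mod_cast hne)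
      have h1 : (1 : ℝ) ≤ |(m' : ℝ) - m| := by
        calc (1 : ℝ) = ((1 : ℤ) : ℝ) := by norm_num
          _ ≤ |((m' - m : ℤ) : ℝ)| := by exact_mod_cast Int.one_le_abs h2
          _ = |(m' : ℝ) - m| := by push_cast; ring_nf
      have h3 : |(m' : ℝ) - m| < 1 := by
        calc |(m' : ℝ) - m| = |((m' : ℝ) - a) + (a - m)| := by ring_nf
          _ ≤ |(m' : ℝ) - a| + |a - (m : ℝ)| := abs_add_le _ _
          _ < 1/2 + 1/2 := by
              apply add_lt_add hm'
              rw [abs_sub_comm]; exact hm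
          _ = 1 := by norm_num
      linarith
    subst hmm
    -- the integral of f against ν is large
    have hsum : a - 1/2 < ∑ j, (f (x j) : ℝ) := by
      have h := hv1
      simp only [hV1def, Set.mem_preimage, Set.mem_Ioi] at h
      rwa [testAgainstNN_sum_dirac, NNReal.coe_sum] at h
    refine ⟨x, fun j _ => ?_, rfl⟩
    -- each atom is in K
    have hfle : ∀ k : Fin m', (f (x k) : ℝ) ≤ 1 := fun k => by
      exact_mod_cast cutoff_le_one R (x k)
    have herase : ∑ k ∈ Finset.univ.erase j, (f (x k) : ℝ) ≤ (m' : ℝ) - 1 := by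
      have hcard : (Finset.univ.erase j).card = m' - 1 := by
        rw [Finset.card_erase_of_mem (Finset.mem_univ j), Finset.card_univ, Fintype.card_fin]
      have := Finset.sum_le_card_nsmul (Finset.univ.erase j)
        (fun k => (f (x k) : ℝ)) 1 (fun k _ => hfle k)
      rw [hcard, nsmul_eq_mul, mul_one] at this
      have hm1 : ((m' - 1 : ℕ) : ℝ) = (m' : ℝ) - 1 := by
        have : 1 ≤ m' := Nat.one_le_iff_ne_zero.2 (by
          rintro rfl; exact absurd j.2 (by simp))
        rw [Nat.cast_sub this, Nat.cast_one]
      linarith [this, hm1.le, hm1.ge]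
    have hsplit : (f (x j) : ℝ) + ∑ k ∈ Finset.univ.erase j, (f (x k) : ℝ)
        = ∑ k, (f (x k) : ℝ) := Finset.add_sum_erase Finset.univ (fun k => (f (x k) : ℝ)) (Finset.mem_univ j)
    have hfj : (0 : ℝ) < (f (x j) : ℝ) := by
      have := hma.1
      nlinarith [hsum, herase, hsplit]
    have hne : f (x j) ≠ 0 := by
      intro h0
      rw [h0] at hfj
      simp at hfj
    have := norm_lt_of_cutoff_ne_zero R hne
    simp only [hKdef, mem_closedBall, dist_zero_right]
    linarith
  -- μ is in the closure of N ∩ (V0 ∩ V1), hence in T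
  have hclo : μ ∈ closure (N ∩ (V0 ∩ V1)) := by
    rw [_root_.mem_closure_iff]
    intro o ho hmo
    obtain ⟨w, hw1, hw2⟩ := _root_.mem_closure_iff.1 hμ (o ∩ (V0 ∩ V1))
      (ho.inter (hV0open.inter hV1open)) ⟨hmo, hμV0, hμV1⟩
    exact ⟨w, hw1.1, hw2, hw1.2⟩
  have hμT : μ ∈ T := hTcompact.isClosed.closure_subset ((closure_mono hsub) hclo)
  obtain ⟨x, _, hxe⟩ := hμT
  exact ⟨m, x, hxe.symm⟩
end
end

section
/- The set E is closed in the space of finite Borel measures on ℐ × ℝ^d equipped with the weak topology. -/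
open MeasureTheory

noncomputable section

/-- `ℐ` carries the discrete topology. -/
instance : TopologicalSpace (List ℕ) := ⊥
instance : DiscreteTopology (List ℕ) := ⟨rfl⟩
/-- Its Borel σ-algebra is the full power set. -/
instance : MeasurableSpace (List ℕ) := ⊤
instance : BorelSpace (List ℕ) := ⟨borel_eq_top_of_discrete.symm⟩

/-- `i ≺ j`: `i` is a strict prefix of `j`, i.e. `j = i ++ l` for some nonempty `l`. -/
def sPrefix (i j : List ℕ) : Prop := ∃ l : List ℕ, l ≠ [] ∧ j = i ++ l

/-- The set of admissible configurations. -/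
def Padm : Set (Finset (List ℕ)) := {V | ∀ i ∈ V, ∀ j ∈ V, ¬ sPrefix i j}

/-- The state space `E`, viewed inside the space of finite Borel measures on
`ℐ × ℝ^d`. -/
def E (d : ℕ) : Set (FiniteMeasure (List ℕ × EuclideanSpace ℝ (Fin d))) :=
  {μ | ∃ V ∈ Padm, ∃ x : List ℕ → EuclideanSpace ℝ (Fin d),
    μ = ∑ i ∈ V, diracFM (i, x i)}

/-! ### Auxiliary material for the proof -/

open BoundedContinuousFunction
open scoped BoundedContinuousFunction

/-- A finite measure of total mass one all of whose bounded continuous functions have zero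
variance is a Dirac mass. -/
lemma eq_dirac_of_sq {Y : Type*} [MetricSpace Y] [SecondCountableTopology Y]
    [MeasurableSpace Y] [OpensMeasurableSpace Y] (ρ : Measure Y) [IsFiniteMeasure ρ]
    (h1 : ρ Set.univ = 1)
    (h : ∀ f : Y →ᵇ ℝ, (∫ y, f y * f y ∂ρ) = (∫ y, f y ∂ρ) * (∫ y, f y ∂ρ)) :
    ∃ x, ρ = Measure.dirac x := by
  have key : ∀ f : Y →ᵇ ℝ, ∀ᵐ y ∂ρ, f y = ∫ z, f z ∂ρ := by
    intro f
    set c := ∫ z, f z ∂ρ with hc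
    have hfi : Integrable (fun y => f y) ρ := f.integrable ρ
    have hfi2 : Integrable (fun y => f y * f y) ρ := by
      have := (f * f).integrable ρ
      exact this
    have hint : Integrable (fun y => (f y - c)^2) ρ := by
      have heq : (fun y => (f y - c)^2) = fun y => (f y * f y - (2*c) * f y) + c^2 := by
        ext y; ring
      rw [heq]
      exact (hfi2.sub (hfi.const_mul _)).add (integrable_const _)
    have hzero : ∫ y, (f y - c)^2 ∂ρ = 0 := by
      have heq : ∀ y, (f y - c)^2 = (f y * f y - (2*c) * f y) + c^2 := fun y => by ring
      simp_rw [heq]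
      have hsub : Integrable (fun y => f y * f y - 2 * c * f y) ρ :=
        hfi2.sub (hfi.const_mul _)
      have I1 : ∫ y, (f y * f y - 2 * c * f y) + c^2 ∂ρ
          = (∫ y, (f y * f y - 2 * c * f y) ∂ρ) + ∫ _, (c^2 : ℝ) ∂ρ :=
        integral_add hsub (integrable_const _)
      have I2 : ∫ y, (f y * f y - 2 * c * f y) ∂ρ
          = (∫ y, f y * f y ∂ρ) - ∫ y, 2 * c * f y ∂ρ :=
        integral_sub hfi2 (hfi.const_mul _)
      have I3 : ∫ y, 2 * c * f y ∂ρ = 2 * c * ∫ y, f y ∂ρ := integral_const_mul _ _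
      have I4 : ∫ _, (c^2 : ℝ) ∂ρ = c^2 := by
        rw [integral_const, measureReal_def, h1, ENNReal.toReal_one, one_smul]
      rw [I1, I2, I3, I4, h f]
      ring
    have hae := (integral_eq_zero_iff_of_nonneg (fun y => sq_nonneg _) hint).mp hzero
    filter_upwards [hae] with y hy
    have : (f y - c)^2 = 0 := hy
    have := pow_eq_zero_iff (n := 2) two_ne_zero |>.mp this
    linarith [sub_eq_zero.mp this]
  have hx : ∃ x : Y, ∀ r : ℝ, 0 < r → ρ (Metric.ball x r) ≠ 0 := by
    by_contra hcon
    push_neg at hcon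
    choose r hr hball using hcon
    obtain ⟨T, hTc, hTU⟩ := TopologicalSpace.isOpen_iUnion_countable
      (fun x => Metric.ball x (r x)) (fun x => Metric.isOpen_ball)
    have h0 : ρ Set.univ = 0 := by
      have h2 : ρ (⋃ x ∈ T, Metric.ball x (r x)) = 0 :=
        (measure_biUnion_null_iff hTc).mpr (fun x _ => hball x)
      refine measure_mono_null ?_ h2
      intro y _
      rw [hTU]
      exact Set.mem_iUnion.mpr ⟨y, Metric.mem_ball_self (hr y)⟩
    rw [h1] at h0
    exact one_ne_zero h0
  obtain ⟨x, hx⟩ := hx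
  set g : Y →ᵇ ℝ := BoundedContinuousFunction.ofNormedAddCommGroup
    (fun y => min (dist y x) 1)
    (((continuous_id.dist continuous_const)).min continuous_const) 1
    (fun y => by
      rw [Real.norm_eq_abs, abs_of_nonneg (le_min dist_nonneg zero_le_one)]
      exact min_le_right _ _) with hg
  have hgy : ∀ y, g y = min (dist y x) 1 := fun y => rfl
  have hgc := key g
  set c := ∫ z, g z ∂ρ with hc
  have hc0 : c = 0 := by
    by_contra hne
    have hcpos : 0 < c :=
      lt_of_le_of_ne (integral_nonneg (fun y => le_min dist_nonneg zero_le_one)) (Ne.symm hne)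
    have hsub : Metric.ball x (min c 1) ⊆ {y | ¬ (g y = c)} := by
      intro y hy
      rw [Metric.mem_ball] at hy
      have h1' : dist y x < 1 := lt_of_lt_of_le hy (min_le_right _ _)
      have hgyy : g y = dist y x := by rw [hgy]; exact min_eq_left h1'.le
      have : g y < c := by rw [hgyy]; exact lt_of_lt_of_le hy (min_le_left _ _)
      exact fun hcon => absurd hcon (ne_of_lt this)
    have : ρ (Metric.ball x (min c 1)) = 0 := measure_mono_null hsub (ae_iff.mp hgc)
    exact hx _ (lt_min hcpos one_pos) this
  have hxc : ρ {x}ᶜ = 0 := by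
    rw [hc0] at hgc
    refine measure_mono_null ?_ (ae_iff.mp hgc)
    intro y hy
    simp only [Set.mem_compl_iff, Set.mem_singleton_iff] at hy
    have : 0 < min (dist y x) 1 := lt_min (dist_pos.mpr hy) one_pos
    simp only [Set.mem_setOf_eq, hgy]
    exact ne_of_gt this
  refine ⟨x, Measure.ext fun s hs => ?_⟩
  rw [Measure.dirac_apply' _ hs]
  by_cases hxs : x ∈ s
  · have hsc : ρ sᶜ = 0 := by
      refine measure_mono_null ?_ hxc
      intro y hy
      simp only [Set.mem_compl_iff, Set.mem_singleton_iff]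
      exact fun h => hy (h ▸ hxs)
    have hadd := measure_add_measure_compl (μ := ρ) hs
    rw [hsc, add_zero, h1] at hadd
    rw [hadd, Set.indicator_of_mem hxs]
    simp
  · have hs0 : ρ s = 0 := by
      refine measure_mono_null ?_ hxc
      intro y hy
      simp only [Set.mem_compl_iff, Set.mem_singleton_iff]
      exact fun h => hxs (h ▸ hy)
    rw [hs0, Set.indicator_of_notMem hxs]

abbrev Yd (d : ℕ) := EuclideanSpace ℝ (Fin d)
abbrev Xd (d : ℕ) := List ℕ × Yd d

/-- indicator of `{i}` as a real valued function on `List ℕ`. -/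
def chi (i : List ℕ) : List ℕ → ℝ := fun j => if j = i then 1 else 0

/-- the test function `p ↦ χ_{p.1 = i} · f p.2`. -/
def G {d : ℕ} (i : List ℕ) (f : Yd d →ᵇ ℝ) : Xd d →ᵇ ℝ :=
  BoundedContinuousFunction.ofNormedAddCommGroup (fun p => chi i p.1 * f p.2)
    ((((continuous_of_discreteTopology (α := List ℕ) (f := chi i))).comp continuous_fst).mul
      (f.continuous.comp continuous_snd))
    ‖f‖ (fun p => by
      by_cases hp : p.1 = i
      · simp only [chi, hp, if_true, ite_true, one_mul]
        simpa using f.norm_coe_le_norm p.2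
      · simp only [chi, if_neg hp, zero_mul, norm_zero]
        exact norm_nonneg f)

lemma G_apply {d : ℕ} (i : List ℕ) (f : Yd d →ᵇ ℝ) (p : Xd d) :
    G i f p = chi i p.1 * f p.2 := rfl

/-- the fiber over `i`. -/
def Fib (d : ℕ) (i : List ℕ) : Set (Xd d) := {i} ×ˢ Set.univ

lemma Fib_mble (d : ℕ) (i : List ℕ) : MeasurableSet (Fib d i) :=
  MeasurableSpace.measurableSet_top.prod MeasurableSet.univ

lemma Fib_disj (d : ℕ) {i j : List ℕ} (hij : i ≠ j) : Disjoint (Fib d i) (Fib d j) := by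
  rw [Set.disjoint_left]
  rintro p ⟨hpi, -⟩ ⟨hpj, -⟩
  exact hij (hpi.symm.trans hpj)

/-- the fiber measure over `i`. -/
def fib (d : ℕ) (i : List ℕ) (ν : Measure (Xd d)) : Measure (Yd d) :=
  Measure.map Prod.snd (ν.restrict (Fib d i))

lemma integral_G {d : ℕ} (i : List ℕ) (f : Yd d →ᵇ ℝ) (ν : Measure (Xd d))
    [IsFiniteMeasure ν] :
    ∫ p, G i f p ∂ν = ∫ y, f y ∂(fib d i ν) := by
  rw [fib, integral_map measurable_snd.aemeasurable f.continuous.measurable.aestronglyMeasurable]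
  rw [← setIntegral_eq_integral_of_forall_compl_eq_zero
    (s := Fib d i) (f := fun p => G i f p) (μ := ν) ?_]
  · refine setIntegral_congr_fun (Fib_mble d i) ?_
    intro p hp
    have : p.1 = i := hp.1
    simp [G_apply, chi, this]
  · intro p hp
    have : p.1 ≠ i := by
      intro h
      exact hp ⟨h, Set.mem_univ _⟩
    simp [G_apply, chi, this]

lemma fib_univ {d : ℕ} (i : List ℕ) (ν : Measure (Xd d)) :
    fib d i ν Set.univ = ν (Fib d i) := by
  rw [fib, Measure.map_apply measurable_snd MeasurableSet.univ, Set.preimage_univ,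
    Measure.restrict_apply_univ]

def oneB (d : ℕ) : Yd d →ᵇ ℝ := BoundedContinuousFunction.const _ 1

lemma integral_G_sum {d : ℕ} (V : Finset (List ℕ)) (x : List ℕ → Yd d)
    (i : List ℕ) (f : Yd d →ᵇ ℝ) :
    ∫ p, G i f p ∂(∑ k ∈ V, Measure.dirac ((k, x k) : Xd d))
      = if i ∈ V then f (x i) else 0 := by
  rw [integral_finset_sum_measure (fun k _ => (G i f).integrable _)]
  have : ∀ k ∈ V, ∫ p, G i f p ∂(Measure.dirac ((k, x k) : Xd d))
      = if k = i then f (x k) else 0 := by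
    intro k _
    rw [integral_dirac' _ _ ((G i f).continuous.stronglyMeasurable)]
    simp [G_apply, chi]
  rw [Finset.sum_congr rfl this, Finset.sum_ite_eq' V i (fun k => f (x k))]

/-- `E` is closed in the space of finite Borel measures on `ℐ × ℝ^d` equipped with
the weak topology. -/
theorem E_isClosed (d : ℕ) : IsClosed (E d) := by
  classical
  -- the integral functional
  set Iv : (Xd d →ᵇ ℝ) → FiniteMeasure (Xd d) → ℝ :=
    fun g μ => ∫ p, g p ∂(μ : Measure (Xd d)) with hIv
  have hI : ∀ g : Xd d →ᵇ ℝ, Continuous (Iv g) := fun g =>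
    FiniteMeasure.continuous_integral_boundedContinuousFunction g
  -- the closed description of `E`
  have hE : E d =
      (⋂ i : List ℕ, {μ | Iv (G i (oneB d)) μ * (Iv (G i (oneB d)) μ - 1) = 0}) ∩
      ((⋂ i : List ℕ, ⋂ j : List ℕ, ⋂ _ : sPrefix i j,
        {μ | Iv (G i (oneB d)) μ * Iv (G j (oneB d)) μ = 0}) ∩
      (⋂ i : List ℕ, ⋂ f : Yd d →ᵇ ℝ,
        {μ | Iv (G i (f * f)) μ * Iv (G i (oneB d)) μ = Iv (G i f) μ * Iv (G i f) μ})) := by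
    ext μ
    simp only [Set.mem_inter_iff, Set.mem_iInter, Set.mem_setOf_eq]
    constructor
    · rintro ⟨V, hV, x, rfl⟩
      have hco : ((∑ k ∈ V, diracFM ((k, x k) : Xd d) : FiniteMeasure (Xd d)) : Measure (Xd d))
          = ∑ k ∈ V, Measure.dirac ((k, x k) : Xd d) :=
        map_sum FiniteMeasure.toMeasureAddMonoidHom (fun k => diracFM ((k, x k) : Xd d)) V
      have hIvs : ∀ (i : List ℕ) (f : Yd d →ᵇ ℝ),
          Iv (G i f) (∑ k ∈ V, diracFM ((k, x k) : Xd d))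
            = if i ∈ V then f (x i) else 0 := by
        intro i f
        show ∫ p, G i f p ∂((∑ k ∈ V, diracFM ((k, x k) : Xd d) : FiniteMeasure (Xd d)) :
          Measure (Xd d)) = _
        rw [hco]
        exact integral_G_sum V x i f
      refine ⟨fun i => ?_, fun i j hpre => ?_, fun i f => ?_⟩
      · rw [hIvs]
        by_cases hi : i ∈ V <;> simp [hi, oneB]
      · rw [hIvs, hIvs]
        by_cases hi : i ∈ V
        · by_cases hj : j ∈ V
          · exact absurd hpre (hV i hi j hj)
          · simp [hj]
        · simp [hi]
      · rw [hIvs, hIvs, hIvs]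
        by_cases hi : i ∈ V <;> simp [hi, oneB]
    · rintro ⟨hA1, hA2, hA3⟩
      set ν : Measure (Xd d) := (μ : Measure (Xd d)) with hν
      have hIv1 : ∀ i, Iv (G i (oneB d)) μ = (ν (Fib d i)).toReal := by
        intro i
        show ∫ p, G i (oneB d) p ∂ν = _
        rw [integral_G]
        have : ∀ y : Yd d, (oneB d) y = (1 : ℝ) := fun y => rfl
        simp_rw [this]
        rw [integral_const, smul_eq_mul, mul_one, measureReal_def, fib_univ]
      have hw : ∀ i, ν (Fib d i) = 0 ∨ ν (Fib d i) = 1 := by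
        intro i
        have h1 := hA1 i
        rw [hIv1 i] at h1
        rcases mul_eq_zero.mp h1 with h | h
        · rcases (ENNReal.toReal_eq_zero_iff _).mp h with h' | h'
          · exact Or.inl h'
          · exact absurd h' (measure_ne_top ν _)
        · right
          have : (ν (Fib d i)).toReal = 1 := by linarith [sub_eq_zero.mp h]
          exact (ENNReal.toReal_eq_one_iff _).mp this
      set S : Set (List ℕ) := {i | ν (Fib d i) = 1} with hS
      have hSfin : S.Finite := by
        by_contra hinf
        obtain ⟨n, hn⟩ := ENNReal.exists_nat_gt (measure_ne_top ν Set.univ)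
        obtain ⟨t, htS, htcard⟩ := Set.Infinite.exists_subset_card_eq hinf n
        have hmeas : ν (⋃ i ∈ t, Fib d i) = ∑ i ∈ t, ν (Fib d i) :=
          measure_biUnion_finset (fun a _ b _ hab => Fib_disj d hab) (fun i _ => Fib_mble d i)
        have hsum : ∑ i ∈ t, ν (Fib d i) = n := by
          rw [Finset.sum_congr rfl (fun i hi => htS hi), Finset.sum_const, htcard, nsmul_eq_mul,
            mul_one]
        have hle : ν (⋃ i ∈ t, Fib d i) ≤ ν Set.univ := measure_mono (Set.subset_univ _)
        rw [hmeas, hsum] at hle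
        exact absurd hn (not_lt.mpr hle)
      set V : Finset (List ℕ) := hSfin.toFinset with hVdef
      have hmemV : ∀ i, i ∈ V ↔ ν (Fib d i) = 1 := fun i => by
        rw [hVdef, Set.Finite.mem_toFinset]; exact Iff.rfl
      have hfinfib : ∀ i, IsFiniteMeasure (fib d i ν) := fun i =>
        ⟨by rw [fib_univ]; exact measure_lt_top ν _⟩
      have hdirac : ∀ i ∈ V, ∃ z : Yd d, fib d i ν = Measure.dirac z := by
        intro i hi
        haveI := hfinfib i
        refine eq_dirac_of_sq _ (by rw [fib_univ]; exact (hmemV i).mp hi) ?_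
        intro f
        have h3 := hA3 i f
        have e1 : Iv (G i (f * f)) μ = ∫ z, f z * f z ∂(fib d i ν) := by
          show ∫ p, G i (f * f) p ∂ν = _
          rw [integral_G]
          have : ∀ z : Yd d, (f * f) z = f z * f z := fun z => rfl
          simp_rw [this]
        have e2 : Iv (G i f) μ = ∫ z, f z ∂(fib d i ν) := integral_G i f ν
        have e3 : Iv (G i (oneB d)) μ = 1 := by
          rw [hIv1 i, (hmemV i).mp hi, ENNReal.toReal_one]
        rw [e1, e2, e3, mul_one] at h3
        exact h3
      choose! y hy using hdirac
      refine ⟨V, ?_, y, ?_⟩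
      · intro i hi j hj hpre
        have h2 := hA2 i j hpre
        rw [hIv1 i, hIv1 j, (hmemV i).mp hi, (hmemV j).mp hj, ENNReal.toReal_one, mul_one] at h2
        exact one_ne_zero h2
      · apply FiniteMeasure.toMeasure_injective
        have hco2 : ((∑ i ∈ V, diracFM ((i, y i) : Xd d) : FiniteMeasure (Xd d)) :
            Measure (Xd d)) = ∑ i ∈ V, Measure.dirac ((i, y i) : Xd d) :=
          map_sum FiniteMeasure.toMeasureAddMonoidHom (fun i => diracFM ((i, y i) : Xd d)) V
        rw [hco2]
        show ν = _
        -- each fiber restriction is a Dirac mass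
        have hres : ∀ i ∈ V, ν.restrict (Fib d i) = Measure.dirac ((i, y i) : Xd d) := by
          intro i hi
          have hnull : ν.restrict (Fib d i) ((Fib d i)ᶜ) = 0 := by
            rw [Measure.restrict_apply (Fib_mble d i).compl, Set.compl_inter_self,
              measure_empty]
          have hae : (fun p : Xd d => ((i, p.2) : Xd d)) =ᵐ[ν.restrict (Fib d i)] id := by
            have hsub : {p : Xd d | ¬ ((i, p.2) : Xd d) = p} ⊆ (Fib d i)ᶜ := by
              intro p hp hpF
              exact hp (Prod.ext hpF.1.symm rfl)
            exact ae_iff.mpr (measure_mono_null hsub hnull)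
          have h5 : Measure.map (fun p : Xd d => ((i, p.2) : Xd d)) (ν.restrict (Fib d i))
              = ν.restrict (Fib d i) := by
            rw [Measure.map_congr hae, Measure.map_id]
          have hg : Measurable (fun z : Yd d => ((i, z) : Xd d)) :=
            measurable_const.prodMk measurable_id
          have hmm : Measure.map (fun p : Xd d => ((i, p.2) : Xd d)) (ν.restrict (Fib d i))
              = Measure.map (fun z : Yd d => ((i, z) : Xd d))
                  (Measure.map Prod.snd (ν.restrict (Fib d i))) := by
            rw [Measure.map_map hg measurable_snd]
            rfl
          have hfibi : Measure.map Prod.snd (ν.restrict (Fib d i)) = Measure.dirac (y i) :=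
            hy i hi
          rw [← h5, hmm, hfibi, Measure.map_dirac' hg]
        set tU : Set (Xd d) := ⋃ i ∈ V, Fib d i with htU
        have hmble : MeasurableSet tU :=
          MeasurableSet.biUnion V.countable_toSet (fun i _ => Fib_mble d i)
        have hUnivCover : (⋃ i : List ℕ, Fib d i) = Set.univ := by
          ext p
          simp only [Set.mem_univ, iff_true]
          exact Set.mem_iUnion.mpr ⟨p.1, ⟨rfl, trivial⟩⟩
        have htsum : ν Set.univ = ∑' i : List ℕ, ν (Fib d i) := by
          rw [← hUnivCover, measure_iUnion (fun a b hab => Fib_disj d hab)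
            (fun i => Fib_mble d i)]
        have htsum2 : ∑' i : List ℕ, ν (Fib d i) = ∑ i ∈ V, ν (Fib d i) :=
          tsum_eq_sum (fun i hi => by
            rcases hw i with h | h
            · exact h
            · exact absurd ((hmemV i).mpr h) hi)
        have hVmass : ν tU = ν Set.univ := by
          rw [htU, measure_biUnion_finset (fun a _ b _ hab => Fib_disj d hab)
            (fun i _ => Fib_mble d i), htsum, htsum2]
        have hcompl : ν tUᶜ = 0 := by
          have hadd := measure_add_measure_compl (μ := ν) hmble
          rw [hVmass] at hadd
          exact (ENNReal.add_right_inj (measure_ne_top ν _)).mp (by rw [add_zero]; exact hadd)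
        refine Measure.ext fun A hA => ?_
        have hsplit := measure_inter_add_diff (μ := ν) A hmble
        have hdiff : ν (A \ tU) = 0 :=
          measure_mono_null (fun p hp => hp.2) hcompl
        have hAint : A ∩ tU = ⋃ i ∈ V, (A ∩ Fib d i) := by
          rw [htU, Set.inter_iUnion₂]
        have hsum : ν (A ∩ tU) = ∑ i ∈ V, ν (A ∩ Fib d i) := by
          rw [hAint]
          exact measure_biUnion_finset
            (fun a ha b hb hab => ((Fib_disj d hab).mono inf_le_right inf_le_right))
            (fun i _ => hA.inter (Fib_mble d i))
        have hterm : ∀ i ∈ V, ν (A ∩ Fib d i) = Measure.dirac ((i, y i) : Xd d) A := by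
          intro i hi
          rw [← Measure.restrict_apply hA, hres i hi]
        calc ν A = ν (A ∩ tU) + ν (A \ tU) := hsplit.symm
          _ = (∑ i ∈ V, ν (A ∩ Fib d i)) + 0 := by rw [hdiff, hsum]
          _ = ∑ i ∈ V, Measure.dirac ((i, y i) : Xd d) A := by
              rw [add_zero]; exact Finset.sum_congr rfl hterm
          _ = (∑ i ∈ V, Measure.dirac ((i, y i) : Xd d)) A :=
              (Measure.finset_sum_apply V _ A).symm
  rw [hE]
  refine IsClosed.inter ?_ (IsClosed.inter ?_ ?_)
  · exact isClosed_iInter fun i => isClosed_eq ((hI _).mul ((hI _).sub continuous_const))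
      continuous_const
  · exact isClosed_iInter fun i => isClosed_iInter fun j => isClosed_iInter fun _ =>
      isClosed_eq ((hI _).mul (hI _)) continuous_const
  · exact isClosed_iInter fun i => isClosed_iInter fun f =>
      isClosed_eq ((hI _).mul (hI _)) ((hI _).mul (hI _))
end
end

section
/- If λ_n = Σ_{i∈V_n} δ_{(i, x_{i,n})} is a sequence in E converging in the weak topology of finite Borel measures on ℐ × ℝ^d to λ = Σ_{i∈V} δ_{(i, x_i)} ∈ E, then there exists N ∈ ℕ such that V_n = V for all n ≥ N, and x_{i,n} → x_i in ℝ^d for every i ∈ V. -/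
open MeasureTheory Filter

noncomputable section

open BoundedContinuousFunction

lemma integral_fm_sum {X : Type*} [MeasurableSpace X] [TopologicalSpace X] [OpensMeasurableSpace X]
    {ι : Type*} (s : Finset ι) (μ : ι → FiniteMeasure X) (f : X →ᵇ ℝ) :
    ∫ y, f y ∂((∑ i ∈ s, μ i : FiniteMeasure X) : Measure X)
      = ∑ i ∈ s, ∫ y, f y ∂(μ i : Measure X) := by
  have h : ((∑ i ∈ s, μ i : FiniteMeasure X) : Measure X) = ∑ i ∈ s, (μ i : Measure X) := by
    exact map_sum FiniteMeasure.toMeasureAddMonoidHom μ s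
  rw [h, integral_finset_sum_measure (fun i _ => f.integrable _)]

lemma nat_eq_of_dist_lt_one {a b : ℕ} (h : dist (a : ℝ) (b : ℝ) < 1) : a = b := by
  by_contra hne
  have h1 : ((a : ℤ) - b) ≠ 0 := by
    simp only [sub_ne_zero]
    exact_mod_cast hne
  have h2 : (1 : ℤ) ≤ |(a : ℤ) - b| := Int.one_le_abs h1
  rw [Real.dist_eq] at h
  have : |(a : ℝ) - b| = ((|(a : ℤ) - b| : ℤ) : ℝ) := by push_cast; ring_nf
  rw [this] at h
  have : (1 : ℝ) ≤ ((|(a : ℤ) - b| : ℤ) : ℝ) := by exact_mod_cast h2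
  linarith

/-- If `λ_n = Σ_{i∈V_n} δ_{(i,x_{i,n})}` is a sequence in `E` converging in the weak
topology of finite Borel measures on `ℐ × ℝ^d` to `λ = Σ_{i∈V} δ_{(i,x_i)} ∈ E`,
then the configurations stabilize (`V_n = V` for all large `n`) and the positions
converge: `x_{i,n} → x_i` for every `i ∈ V`. -/
theorem weak_convergence_in_E (d : ℕ)
    (Vn : ℕ → Finset (List ℕ)) (hVn : ∀ n, Vn n ∈ Padm)
    (xn : ℕ → List ℕ → EuclideanSpace ℝ (Fin d))
    (V : Finset (List ℕ)) (hV : V ∈ Padm)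
    (x : List ℕ → EuclideanSpace ℝ (Fin d))
    (hconv : Tendsto
      (fun n => ∑ i ∈ Vn n, diracFM ((i, xn n i) : List ℕ × EuclideanSpace ℝ (Fin d)))
      atTop (nhds (∑ i ∈ V, diracFM ((i, x i) : List ℕ × EuclideanSpace ℝ (Fin d))))) :
    (∃ N : ℕ, ∀ n ≥ N, Vn n = V) ∧
    ∀ i ∈ V, Tendsto (fun n => xn n i) atTop (nhds (x i)) := by
  set X := List ℕ × EuclideanSpace ℝ (Fin d)
  rw [FiniteMeasure.tendsto_iff_forall_integral_tendsto] at hconv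
  -- key: testing against bounded continuous functions
  have key : ∀ f : X →ᵇ ℝ, Tendsto (fun n => ∑ i ∈ Vn n, f (i, xn n i)) atTop
      (nhds (∑ i ∈ V, f (i, x i))) := by
    intro f
    have h := hconv f
    rw [integral_fm_sum] at h
    simp only [integral_fm_sum] at h
    convert h using 2 with n
    · exact (Finset.sum_congr rfl fun i _ => by
        rw [show ((diracFM ((i, xn n i) : X) : FiniteMeasure X) : Measure X)
          = Measure.dirac (i, xn n i) from rfl, integral_dirac]).symm
    · exact (Finset.sum_congr rfl fun i _ => by
        rw [show ((diracFM ((i, x i) : X) : FiniteMeasure X) : Measure X)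
          = Measure.dirac (i, x i) from rfl, integral_dirac]).symm
  -- indicator test function for a fixed index i
  have keyInd : ∀ (i : List ℕ) (ψ : EuclideanSpace ℝ (Fin d) →ᵇ ℝ),
      Tendsto (fun n => if i ∈ Vn n then ψ (xn n i) else 0) atTop
        (nhds (if i ∈ V then ψ (x i) else 0)) := by
    intro i ψ
    have indC : Continuous (fun j : List ℕ => if j = i then (1:ℝ) else 0) :=
      continuous_of_discreteTopology
    set ind : (List ℕ) →ᵇ ℝ := ofNormedAddCommGroup _ indC 1
      (fun j => by by_cases hj : j = i <;> simp [hj]) with hind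
    set f : X →ᵇ ℝ :=
      (ind.compContinuous ⟨Prod.fst, continuous_fst⟩) *
      (ψ.compContinuous ⟨Prod.snd, continuous_snd⟩) with hf
    have hfval : ∀ (j : List ℕ) (y : EuclideanSpace ℝ (Fin d)),
        f (j, y) = if j = i then ψ y else 0 := by
      intro j y
      simp only [hf, hind, mul_apply, compContinuous_apply, ContinuousMap.coe_mk,
        coe_ofNormedAddCommGroup, ite_mul, one_mul, zero_mul]
    have h := key f
    have e1 : ∀ (W : Finset (List ℕ)) (y : List ℕ → EuclideanSpace ℝ (Fin d)),
        ∑ j ∈ W, f (j, y j) = if i ∈ W then ψ (y i) else 0 := by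
      intro W y
      rw [Finset.sum_congr rfl fun j _ => hfval j (y j)]
      exact Finset.sum_ite_eq' W i (fun j => ψ (y j))
    rw [e1] at h
    simpa only [e1] using h
  -- eventual membership of each i ∈ V
  have hmem : ∀ i ∈ V, ∀ᶠ n in atTop, i ∈ Vn n := by
    intro i hi
    have h := keyInd i (const _ 1)
    simp only [const_apply, hi, if_true] at h
    have h2 := h.eventually (lt_mem_nhds (by norm_num : (1:ℝ)/2 < 1))
    filter_upwards [h2] with n hn
    by_contra hni
    rw [if_neg hni] at hn
    norm_num at hn
  -- card convergence
  have hcard : ∀ᶠ n in atTop, (Vn n).card = V.card := by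
    have h := key (const _ 1)
    simp only [const_apply, Finset.sum_const, nsmul_eq_mul, mul_one] at h
    have h2 := (Metric.tendsto_atTop.mp h) 1 one_pos
    obtain ⟨N, hN⟩ := h2
    exact eventually_atTop.2 ⟨N, fun n hn => nat_eq_of_dist_lt_one (hN n hn)⟩
  have hsub : ∀ᶠ n in atTop, V ⊆ Vn n := by
    have : ∀ᶠ n in atTop, ∀ i ∈ V, i ∈ Vn n := by
      rw [eventually_all_finset]
      exact hmem
    filter_upwards [this] with n hn
    exact fun i hi => hn i hi
  have hVeq : ∀ᶠ n in atTop, Vn n = V := by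
    filter_upwards [hcard, hsub] with n h1 h2
    exact (Finset.eq_of_subset_of_card_le h2 (le_of_eq h1)).symm
  obtain ⟨N, hN⟩ := eventually_atTop.mp hVeq
  refine ⟨⟨N, hN⟩, ?_⟩
  -- convergence of positions
  intro i hi
  have ψC : Continuous (fun y : EuclideanSpace ℝ (Fin d) => min (dist y (x i)) 1) := by
    exact (continuous_id.dist continuous_const).min continuous_const
  set ψ : (EuclideanSpace ℝ (Fin d)) →ᵇ ℝ := ofNormedAddCommGroup _ ψC 1 (fun y => by
    show ‖min (dist y (x i)) 1‖ ≤ 1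
    rw [Real.norm_eq_abs, abs_of_nonneg (le_min dist_nonneg zero_le_one)]
    exact min_le_right _ _) with hψ
  have h := keyInd i ψ
  have hψval : ∀ y, ψ y = min (dist y (x i)) 1 := fun y => rfl
  simp only [hψval, hi, if_true, dist_self] at h
  rw [show min (0:ℝ) 1 = 0 from min_eq_left zero_le_one] at h
  -- remove the eventually-true indicator
  have h' : Tendsto (fun n => min (dist (xn n i) (x i)) 1) atTop (nhds 0) := by
    apply h.congr'
    filter_upwards [hmem i hi] with n hn
    rw [if_pos hn]
  rw [Metric.tendsto_atTop]
  intro ε hε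
  have hδ : (0:ℝ) < min ε (1/2) := lt_min hε (by norm_num)
  obtain ⟨M, hM⟩ := (Metric.tendsto_atTop.mp h') (min ε (1/2)) hδ
  refine ⟨M, fun n hn => ?_⟩
  have := hM n hn
  rw [Real.dist_eq, sub_zero, abs_of_nonneg (le_min dist_nonneg zero_le_one)] at this
  rcases le_or_gt 1 (dist (xn n i) (x i)) with hd | hd
  · exfalso
    rw [min_eq_right hd] at this
    have : min ε (1/2) ≤ 1/2 := min_le_right _ _
    linarith [hM n hn]
  · rw [min_eq_left hd.le] at this
    exact lt_of_lt_of_le this (min_le_left _ _)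
end
end

section
/- Let m ≥ 1 and x, y ∈ (ℝ^d)^m. Suppose that for each index i ∈ {1,…,m} we are given γ_i ∈ [0, C_γ] and nonnegative reals (p_{i,k})_{k≥0} with Σ_{k≥0} p_{i,k} = 1 and Σ_{k≥1} k p_{i,k} ≤ C¹. Then the double series is absolutely convergent and Σ_{i=1}^m γ_i Σ_{k≥0} ( ‖𝔢^i_k(x) − 𝔢^i_k(y)‖² − ‖x − y‖² ) p_{i,k} ≤ C_γ C¹ ‖x − y‖². -/
noncomputable section

/-- `(ℝ^d)^m` with its Euclidean (L²) norm. -/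
abbrev Vec (d m : ℕ) := PiLp 2 (fun _ : Fin m => EuclideanSpace ℝ (Fin d))

/-- The duplication map `𝔢^i_k : (ℝ^d)^m → (ℝ^d)^{m−1+k}` replacing the `i`-th
coordinate by `k` consecutive copies of itself (deleting it if `k = 0`). -/
def dup {d m : ℕ} (i : Fin m) (k : ℕ) (x : Vec d m) : Vec d (m - 1 + k) := WithLp.toLp 2 fun j =>
  if h1 : (j : ℕ) < (i : ℕ) then x ⟨j, lt_trans h1 i.isLt⟩
  else if h2 : (j : ℕ) < (i : ℕ) + k then x i
  else x ⟨(j : ℕ) - k + 1, by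
    have hj := j.isLt
    have hi := i.isLt
    omega⟩

lemma dup_sub {d m : ℕ} (i : Fin m) (k : ℕ) (x y : Vec d m) :
    dup i k x - dup i k y = dup i k (x - y) := by
  ext j : 1
  simp only [dup, PiLp.sub_apply, PiLp.toLp_apply]
  split_ifs <;> rfl

lemma norm_sq_dup {d m : ℕ} (i : Fin m) (k : ℕ) (z : Vec d m) :
    ‖dup i k z‖ ^ 2 = ‖z‖ ^ 2 + ((k : ℝ) - 1) * ‖z i‖ ^ 2 := by
  rw [PiLp.norm_sq_eq_of_L2, PiLp.norm_sq_eq_of_L2]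
  have hi := i.isLt
  set F : ℕ → ℝ := fun j => if h : j < m then ‖z ⟨j, h⟩‖ ^ 2 else 0 with hF
  have hzsum : ∑ j : Fin m, ‖z j‖ ^ 2 = ∑ j ∈ Finset.range m, F j := by
    rw [Finset.sum_range]
    apply Finset.sum_congr rfl
    intro j _
    simp [hF, j.isLt]
  have hdsum : ∑ j : Fin (m - 1 + k), ‖dup i k z j‖ ^ 2 =
      ∑ j ∈ Finset.range (m - 1 + k),
        (if j < (i : ℕ) then F j else if j < (i : ℕ) + k then F i else F (j - k + 1)) := by
    rw [Finset.sum_range]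
    apply Finset.sum_congr rfl
    intro j _
    have hj := j.isLt
    simp only [dup, PiLp.toLp_apply]
    split_ifs with h1 h2
    · simp only [hF]; rw [dif_pos (by omega : (j:ℕ) < m)]
    · simp only [hF]; rw [dif_pos hi]
    · simp only [hF]; rw [dif_pos (by omega : (j:ℕ) - k + 1 < m)]
  rw [hzsum, hdsum]
  have hik : (i : ℕ) + k ≤ m - 1 + k := by omega
  have h1 : (i : ℕ) ≤ (i : ℕ) + k := Nat.le_add_right _ _
  rw [← Finset.sum_range_add_sum_Ico _ hik, ← Finset.sum_range_add_sum_Ico _ h1]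
  have hs1 : ∑ j ∈ Finset.range (i : ℕ),
      (if j < (i : ℕ) then F j else if j < (i : ℕ) + k then F i else F (j - k + 1)) =
      ∑ j ∈ Finset.range (i : ℕ), F j := by
    apply Finset.sum_congr rfl
    intro j hj
    rw [Finset.mem_range] at hj
    simp [hj]
  have hs2 : ∑ j ∈ Finset.Ico (i : ℕ) ((i : ℕ) + k),
      (if j < (i : ℕ) then F j else if j < (i : ℕ) + k then F i else F (j - k + 1)) =
      (k : ℝ) * F i := by
    have heq : ∀ j ∈ Finset.Ico (i : ℕ) ((i : ℕ) + k),
        (if j < (i : ℕ) then F j else if j < (i : ℕ) + k then F i else F (j - k + 1)) = F i := by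
      intro j hj
      rw [Finset.mem_Ico] at hj
      rw [if_neg (by omega), if_pos hj.2]
    rw [Finset.sum_congr rfl heq, Finset.sum_const, Nat.card_Ico]
    simp [mul_comm]
  have hs3 : ∑ j ∈ Finset.Ico ((i : ℕ) + k) (m - 1 + k),
      (if j < (i : ℕ) then F j else if j < (i : ℕ) + k then F i else F (j - k + 1)) =
      ∑ j ∈ Finset.Ico ((i : ℕ) + 1) m, F j := by
    have heq : ∀ j ∈ Finset.Ico ((i : ℕ) + k) (m - 1 + k),
        (if j < (i : ℕ) then F j else if j < (i : ℕ) + k then F i else F (j - k + 1)) =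
        F (j - k + 1) := by
      intro j hj
      rw [Finset.mem_Ico] at hj
      rw [if_neg (by omega), if_neg (by omega)]
    rw [Finset.sum_congr rfl heq, Finset.sum_Ico_eq_sum_range, Finset.sum_Ico_eq_sum_range]
    have hlen : m - 1 + k - ((i : ℕ) + k) = m - ((i : ℕ) + 1) := by omega
    rw [hlen]
    apply Finset.sum_congr rfl
    intro t ht
    rw [Finset.mem_range] at ht
    congr 1
    omega
  rw [hs1, hs2, hs3]
  have hrm : ∑ j ∈ Finset.range m, F j =
      ∑ j ∈ Finset.range (i : ℕ), F j + F i + ∑ j ∈ Finset.Ico ((i : ℕ) + 1) m, F j := by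
    rw [← Finset.sum_range_add_sum_Ico _ (show (i : ℕ) + 1 ≤ m by omega),
      Finset.sum_range_succ]
  have hFi : F (i : ℕ) = ‖z i‖ ^ 2 := by simp [hF, hi]
  rw [hrm, hFi]
  ring

set_option maxHeartbeats 1000000 in
/-- Branching-mechanism bound for the squared norm: if each `γ_i ∈ [0, C_γ]` and
each offspring law `(p_{i,k})_k` has first moment at most `C¹`, then the double
series `Σ_i γ_i Σ_k (‖𝔢^i_k(x) − 𝔢^i_k(y)‖² − ‖x−y‖²) p_{i,k}` is absolutely
convergent and bounded by `C_γ C¹ ‖x − y‖²`. -/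
theorem branching_sq_bound (d m : ℕ) (hm : 1 ≤ m) (x y : Vec d m)
    (Cγ C1 : ℝ) (hCγ : 0 ≤ Cγ) (hC1 : 0 ≤ C1)
    (γ : Fin m → ℝ) (hγ : ∀ i, γ i ∈ Set.Icc (0 : ℝ) Cγ)
    (p : Fin m → ℕ → ℝ) (hp : ∀ i k, 0 ≤ p i k)
    (hp1 : ∀ i, HasSum (p i) 1)
    (hmom : ∀ i, Summable (fun (k : ℕ) => (k : ℝ) * p i k))
    (hmom1 : ∀ i, ∑' (k : ℕ), (k : ℝ) * p i k ≤ C1) :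
    (∀ i, Summable (fun k => |(‖dup i k x - dup i k y‖ ^ 2 - ‖x - y‖ ^ 2) * p i k|)) ∧
    ∑ i, γ i * ∑' k, (‖dup i k x - dup i k y‖ ^ 2 - ‖x - y‖ ^ 2) * p i k ≤
      Cγ * C1 * ‖x - y‖ ^ 2 := by
  have hterm : ∀ (i : Fin m) (k : ℕ),
      (‖dup i k x - dup i k y‖ ^ 2 - ‖x - y‖ ^ 2) * p i k =
      ((k : ℝ) * p i k) * ‖(x - y) i‖ ^ 2 - (p i k) * ‖(x - y) i‖ ^ 2 := by
    intro i k
    rw [dup_sub, norm_sq_dup]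
    ring
  have hci : ∀ i : Fin m, (0 : ℝ) ≤ ‖(x - y) i‖ ^ 2 := fun i => sq_nonneg _
  have h1 : ∀ i : Fin m, Summable (fun k : ℕ => ((k : ℝ) * p i k) * ‖(x - y) i‖ ^ 2) :=
    fun i => (hmom i).mul_right _
  have h2 : ∀ i : Fin m, Summable (fun k : ℕ => (p i k) * ‖(x - y) i‖ ^ 2) :=
    fun i => (hp1 i).summable.mul_right _
  have habs : ∀ i : Fin m,
      Summable (fun k => |(‖dup i k x - dup i k y‖ ^ 2 - ‖x - y‖ ^ 2) * p i k|) := by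
    intro i
    refine Summable.of_nonneg_of_le (fun k => abs_nonneg _) (fun k => ?_) ((h1 i).add (h2 i))
    rw [hterm]
    refine (abs_sub _ _).trans ?_
    rw [abs_of_nonneg (mul_nonneg (mul_nonneg (Nat.cast_nonneg _) (hp i k)) (hci i)),
      abs_of_nonneg (mul_nonneg (hp i k) (hci i))]
  refine ⟨habs, ?_⟩
  have htsum : ∀ i : Fin m,
      ∑' k, (‖dup i k x - dup i k y‖ ^ 2 - ‖x - y‖ ^ 2) * p i k =
      ((∑' (k : ℕ), (k : ℝ) * p i k) - 1) * ‖(x - y) i‖ ^ 2 := by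
    intro i
    calc ∑' k, (‖dup i k x - dup i k y‖ ^ 2 - ‖x - y‖ ^ 2) * p i k
        = ∑' (k : ℕ), (((k : ℝ) * p i k) * ‖(x - y) i‖ ^ 2 - (p i k) * ‖(x - y) i‖ ^ 2) :=
          tsum_congr (fun k => hterm i k)
      _ = (∑' (k : ℕ), ((k : ℝ) * p i k) * ‖(x - y) i‖ ^ 2)
            - ∑' (k : ℕ), (p i k) * ‖(x - y) i‖ ^ 2 := Summable.tsum_sub (h1 i) (h2 i)
      _ = ((∑' (k : ℕ), (k : ℝ) * p i k) - 1) * ‖(x - y) i‖ ^ 2 := by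
          rw [tsum_mul_right, tsum_mul_right, (hp1 i).tsum_eq]
          ring
  have hnormz : ∑ i, ‖(x - y) i‖ ^ 2 = ‖x - y‖ ^ 2 := (PiLp.norm_sq_eq_of_L2 _ _).symm
  calc ∑ i, γ i * ∑' k, (‖dup i k x - dup i k y‖ ^ 2 - ‖x - y‖ ^ 2) * p i k
      = ∑ i, γ i * (((∑' (k : ℕ), (k : ℝ) * p i k) - 1) * ‖(x - y) i‖ ^ 2) :=
        Finset.sum_congr rfl (fun i _ => by rw [htsum])
    _ ≤ ∑ i, Cγ * C1 * ‖(x - y) i‖ ^ 2 := by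
        apply Finset.sum_le_sum
        intro i _
        have hμ0 : (0 : ℝ) ≤ ∑' (k : ℕ), (k : ℝ) * p i k :=
          tsum_nonneg (fun k => mul_nonneg (Nat.cast_nonneg _) (hp i k))
        have hμ1 := hmom1 i
        obtain ⟨hγ0, hγ1⟩ := hγ i
        have key : γ i * ((∑' (k : ℕ), (k : ℝ) * p i k) - 1) ≤ Cγ * C1 := by
          have a1 : γ i * (∑' (k : ℕ), (k : ℝ) * p i k) ≤
              Cγ * (∑' (k : ℕ), (k : ℝ) * p i k) := mul_le_mul_of_nonneg_right hγ1 hμ0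
          have a2 : Cγ * (∑' (k : ℕ), (k : ℝ) * p i k) ≤ Cγ * C1 :=
            mul_le_mul_of_nonneg_left (hmom1 i) hCγ
          nlinarith
        nlinarith [mul_le_mul_of_nonneg_right key (hci i)]
    _ = Cγ * C1 * ‖x - y‖ ^ 2 := by rw [← Finset.mul_sum, hnormz]
end
end

section
/- Let m ≥ 1 and x ∈ (ℝ^d)^m. Suppose that for each index i ∈ {1,…,m} we are given γ_i ∈ [0, C_γ] and nonnegative reals (p_{i,k})_{k≥0} with Σ_{k≥0} p_{i,k} = 1, Σ_{k≥1} k p_{i,k} ≤ C¹, and Σ_{k≥1} k(k−1) p_{i,k} ≤ C². Then the double series is absolutely convergent and Σ_{i=1}^m γ_i Σ_{k≥0} ( ‖𝔢^i_k(x)‖³ − ‖x‖³ ) p_{i,k} ≤ (3/2) C_γ ( (C¹/2) √m + C² ) ‖x‖³. -/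
noncomputable section

lemma dup_norm_sq {d m : ℕ} (hm : 1 ≤ m) (i : Fin m) (k : ℕ) (x : Vec d m) :
    ‖dup i k x‖ ^ 2 = ‖x‖ ^ 2 + ((k : ℝ) - 1) * ‖x i‖ ^ 2 := by
  classical
  set b : ℕ → ℝ := fun n => if h : n < m then ‖x ⟨n, h⟩‖ ^ 2 else 0 with hb
  have hi := i.isLt
  have hbx : ∀ j : Fin m, ‖x j‖ ^ 2 = b j := by
    intro j; simp [hb, j.isLt]
  have hXm : ‖x‖ ^ 2 = ∑ n ∈ Finset.range m, b n := by
    rw [PiLp.norm_sq_eq_of_L2, ← Fin.sum_univ_eq_sum_range b m]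
    exact Finset.sum_congr rfl fun j _ => hbx j
  have hbi : ‖x i‖ ^ 2 = b i := hbx i
  have hcomp : ∀ j : Fin (m - 1 + k), ‖dup i k x j‖ ^ 2 =
      (if (j : ℕ) < (i : ℕ) then b j else if (j : ℕ) < (i : ℕ) + k then b (i : ℕ)
       else b ((j : ℕ) - k + 1)) := by
    intro j
    unfold dup
    split_ifs with h1 h2
    · simp [dif_pos h1, hb, lt_trans h1 i.isLt]
    · simp [dif_neg h1, dif_pos h2, hb, i.isLt]
    · have hj := j.isLt
      have : (j : ℕ) - k + 1 < m := by omega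
      simp [dif_neg h1, dif_neg h2, hb, this]
  have hDN : ‖dup i k x‖ ^ 2 = ∑ n ∈ Finset.range (m - 1 + k),
      (if n < (i : ℕ) then b n else if n < (i : ℕ) + k then b (i : ℕ) else b (n - k + 1)) := by
    rw [PiLp.norm_sq_eq_of_L2, ← Fin.sum_univ_eq_sum_range
      (fun n => if n < (i : ℕ) then b n else if n < (i : ℕ) + k then b (i : ℕ) else b (n - k + 1))]
    exact Finset.sum_congr rfl fun j _ => hcomp j
  set c : ℕ → ℝ := fun n => if n < (i : ℕ) then b n else if n < (i : ℕ) + k then b (i : ℕ)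
      else b (n - k + 1) with hc
  -- split the sums
  have hsplitD : ∑ n ∈ Finset.range (m - 1 + k), c n =
      (∑ n ∈ Finset.Ico 0 (i : ℕ), c n) + (∑ n ∈ Finset.Ico (i : ℕ) ((i : ℕ) + k), c n)
        + ∑ n ∈ Finset.Ico ((i : ℕ) + k) (m - 1 + k), c n := by
    rw [Finset.range_eq_Ico, ← Finset.sum_Ico_consecutive c
      (by omega : 0 ≤ (i:ℕ)) (by omega : (i:ℕ) ≤ m - 1 + k),
      ← Finset.sum_Ico_consecutive c (by omega : (i:ℕ) ≤ (i:ℕ) + k)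
      (by omega : (i:ℕ) + k ≤ m - 1 + k)]
    ring
  have h1 : ∑ n ∈ Finset.Ico 0 (i : ℕ), c n = ∑ n ∈ Finset.Ico 0 (i : ℕ), b n := by
    refine Finset.sum_congr rfl fun n hn => ?_
    rw [Finset.mem_Ico] at hn
    simp [hc, hn.2]
  have h2 : ∑ n ∈ Finset.Ico (i : ℕ) ((i : ℕ) + k), c n = k * b (i : ℕ) := by
    have hcb : ∀ n ∈ Finset.Ico (i:ℕ) ((i:ℕ) + k), c n = b (i:ℕ) := by
      intro n hn
      rw [Finset.mem_Ico] at hn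
      simp [hc, hn.2, Nat.not_lt.mpr hn.1]
    rw [Finset.sum_congr rfl hcb, Finset.sum_const, Nat.card_Ico, nsmul_eq_mul]
    norm_num
  have h3 : ∑ n ∈ Finset.Ico ((i : ℕ) + k) (m - 1 + k), c n
      = ∑ n ∈ Finset.Ico ((i : ℕ) + 1) m, b n := by
    rw [Finset.sum_Ico_eq_sum_range, Finset.sum_Ico_eq_sum_range]
    have : m - 1 + k - ((i:ℕ) + k) = m - ((i:ℕ) + 1) := by omega
    rw [this]
    refine Finset.sum_congr rfl fun n hn => ?_
    rw [Finset.mem_range] at hn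
    have e1 : ¬ ((i:ℕ) + k + n < (i:ℕ)) := by omega
    have e2 : ¬ ((i:ℕ) + k + n < (i:ℕ) + k) := by omega
    have e3 : (i:ℕ) + k + n - k + 1 = (i:ℕ) + 1 + n := by omega
    simp [hc, e1, e2, e3]
  have hsplitX : ∑ n ∈ Finset.range m, b n =
      (∑ n ∈ Finset.Ico 0 (i : ℕ), b n) + b (i : ℕ) + ∑ n ∈ Finset.Ico ((i : ℕ) + 1) m, b n := by
    rw [Finset.range_eq_Ico, ← Finset.sum_Ico_consecutive b (by omega : 0 ≤ (i:ℕ))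
      (by omega : (i:ℕ) ≤ m), ← Finset.sum_Ico_consecutive b (by omega : (i:ℕ) ≤ (i:ℕ)+1)
      (by omega : (i:ℕ)+1 ≤ m)]
    have : ∑ n ∈ Finset.Ico (i:ℕ) ((i:ℕ)+1), b n = b (i:ℕ) := by
      rw [Finset.sum_Ico_eq_sum_range]; simp
    rw [this]; ring
  rw [hDN, hXm, hbi]
  rw [hsplitD, h1, h2, h3, hsplitX]
  ring

lemma norm_apply_sq_le {d m : ℕ} (i : Fin m) (x : Vec d m) : ‖x i‖ ^ 2 ≤ ‖x‖ ^ 2 := by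
  rw [PiLp.norm_sq_eq_of_L2 _ x]
  exact Finset.single_le_sum (f := fun j => ‖x j‖ ^ 2) (fun j _ => sq_nonneg _) (Finset.mem_univ i)

lemma kk_nonneg (k : ℕ) : 0 ≤ (k : ℝ) * ((k : ℝ) - 1) := by
  rcases Nat.eq_zero_or_pos k with h | h
  · simp [h]
  · have : (1 : ℝ) ≤ (k : ℝ) := by exact_mod_cast h
    nlinarith

lemma dup_cube_upper {d m : ℕ} (hm : 1 ≤ m) (i : Fin m) (k : ℕ) (x : Vec d m) :
    ‖dup i k x‖ ^ 3 - ‖x‖ ^ 3 ≤ (3/2) * ((k:ℝ) * ((k:ℝ) - 1)) * ‖x i‖ ^ 2 * ‖x‖ := by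
  have hv2 := dup_norm_sq hm i k x
  set u := ‖x‖ with hu'
  set v := ‖dup i k x‖ with hv'
  set a := ‖x i‖ ^ 2 with ha'
  have hu : 0 ≤ u := norm_nonneg _
  have hv : 0 ≤ v := norm_nonneg _
  have ha : 0 ≤ a := sq_nonneg _
  have hau : a ≤ u ^ 2 := norm_apply_sq_le i x
  rcases Nat.eq_zero_or_pos k with hk | hk
  · subst hk
    have hvu2 : v ^ 2 ≤ u ^ 2 := by rw [hv2]; push_cast; nlinarith
    have hvu : v ≤ u := by nlinarith
    push_cast
    nlinarith
  · have hk1 : (1 : ℝ) ≤ (k : ℝ) := by exact_mod_cast hk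
    have hvku2 : v ^ 2 ≤ ((k:ℝ) * u) ^ 2 := by
      rw [hv2]
      nlinarith [mul_nonneg (kk_nonneg k) (sq_nonneg u),
        mul_nonneg (by linarith : (0:ℝ) ≤ (k:ℝ) - 1) (by linarith : (0:ℝ) ≤ u ^ 2 - a)]
    have hvku : v ≤ (k:ℝ) * u := by nlinarith [mul_nonneg (hk1.trans' zero_le_one) hu]
    have huv2 : u ^ 2 ≤ v ^ 2 := by rw [hv2]; nlinarith
    have huv : u ≤ v := by nlinarith
    have key : v ^ 3 - u ^ 3 ≤ (3/2) * v * (v ^ 2 - u ^ 2) := by nlinarith [sq_nonneg (v - u)]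
    have h2 : (3/2) * v * (v ^ 2 - u ^ 2) = (3/2) * v * (((k:ℝ) - 1) * a) := by rw [hv2]; ring
    have h3 : (3/2) * v * (((k:ℝ) - 1) * a) ≤ (3/2) * ((k:ℝ) * u) * (((k:ℝ) - 1) * a) := by
      have : 0 ≤ ((k:ℝ) - 1) * a := mul_nonneg (by linarith) ha
      nlinarith
    calc v ^ 3 - u ^ 3 ≤ (3/2) * v * (v ^ 2 - u ^ 2) := key
      _ = (3/2) * v * (((k:ℝ) - 1) * a) := h2
      _ ≤ (3/2) * ((k:ℝ) * u) * (((k:ℝ) - 1) * a) := h3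
      _ = (3/2) * ((k:ℝ) * ((k:ℝ) - 1)) * a * u := by ring

lemma dup_cube_lower {d m : ℕ} (i : Fin m) (k : ℕ) (x : Vec d m) :
    -‖x‖ ^ 3 ≤ ‖dup i k x‖ ^ 3 - ‖x‖ ^ 3 := by
  have : (0:ℝ) ≤ ‖dup i k x‖ ^ 3 := by positivity
  linarith


/-- Branching-mechanism bound for the cubed norm: if each `γ_i ∈ [0, C_γ]` and each
offspring law `(p_{i,k})_k` has first moment at most `C¹` and factorial second
moment at most `C²`, then the double series
`Σ_i γ_i Σ_k (‖𝔢^i_k(x)‖³ − ‖x‖³) p_{i,k}` is absolutely convergent and bounded by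
`(3/2) C_γ ((C¹/2)√m + C²) ‖x‖³`. -/
theorem branching_cube_bound (d m : ℕ) (hm : 1 ≤ m) (x : Vec d m)
    (Cγ C1 C2 : ℝ) (hCγ : 0 ≤ Cγ) (hC1 : 0 ≤ C1) (hC2 : 0 ≤ C2)
    (γ : Fin m → ℝ) (hγ : ∀ i, γ i ∈ Set.Icc (0 : ℝ) Cγ)
    (p : Fin m → ℕ → ℝ) (hp : ∀ i k, 0 ≤ p i k)
    (hp1 : ∀ i, HasSum (p i) 1)
    (hmom : ∀ i, Summable (fun (k : ℕ) => (k : ℝ) * p i k))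
    (hmom1 : ∀ i, ∑' (k : ℕ), (k : ℝ) * p i k ≤ C1)
    (hmom' : ∀ i, Summable (fun (k : ℕ) => (k : ℝ) * ((k : ℝ) - 1) * p i k))
    (hmom2 : ∀ i, ∑' (k : ℕ), (k : ℝ) * ((k : ℝ) - 1) * p i k ≤ C2) :
    (∀ i, Summable (fun k => |(‖dup i k x‖ ^ 3 - ‖x‖ ^ 3) * p i k|)) ∧
    ∑ i, γ i * ∑' k, (‖dup i k x‖ ^ 3 - ‖x‖ ^ 3) * p i k ≤
      (3 / 2 : ℝ) * Cγ * ((C1 / 2) * Real.sqrt m + C2) * ‖x‖ ^ 3 := by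
  have hsum : ∀ i : Fin m, Summable (fun k => |(‖dup i k x‖ ^ 3 - ‖x‖ ^ 3) * p i k|) := by
    intro i
    have hg : Summable (fun k : ℕ => ‖x‖ ^ 3 * p i k
        + ((3/2) * ‖x i‖ ^ 2 * ‖x‖) * ((k:ℝ) * ((k:ℝ) - 1) * p i k)) :=
      ((hp1 i).summable.mul_left _).add ((hmom' i).mul_left _)
    refine Summable.of_nonneg_of_le (fun k => abs_nonneg _) (fun k => ?_) hg
    rw [abs_mul, abs_of_nonneg (hp i k)]
    have hM : 0 ≤ (3/2) * ((k:ℝ) * ((k:ℝ) - 1)) * ‖x i‖ ^ 2 * ‖x‖ := by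
      have := kk_nonneg k; positivity
    have habs : |‖dup i k x‖ ^ 3 - ‖x‖ ^ 3|
        ≤ ‖x‖ ^ 3 + (3/2) * ((k:ℝ) * ((k:ℝ) - 1)) * ‖x i‖ ^ 2 * ‖x‖ := by
      rw [abs_le]
      constructor
      · have := dup_cube_lower i k x; linarith
      · have := dup_cube_upper hm i k x; have h3 : (0:ℝ) ≤ ‖x‖ ^ 3 := by positivity
        linarith
    calc |‖dup i k x‖ ^ 3 - ‖x‖ ^ 3| * p i k
        ≤ (‖x‖ ^ 3 + (3/2) * ((k:ℝ) * ((k:ℝ) - 1)) * ‖x i‖ ^ 2 * ‖x‖) * p i k :=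
          mul_le_mul_of_nonneg_right habs (hp i k)
      _ = ‖x‖ ^ 3 * p i k + ((3/2) * ‖x i‖ ^ 2 * ‖x‖) * ((k:ℝ) * ((k:ℝ) - 1) * p i k) := by
          ring
  refine ⟨hsum, ?_⟩
  have hSle : ∀ i : Fin m, ∑' k, (‖dup i k x‖ ^ 3 - ‖x‖ ^ 3) * p i k
      ≤ (3/2) * C2 * ‖x i‖ ^ 2 * ‖x‖ := by
    intro i
    have hs1 : Summable (fun k => (‖dup i k x‖ ^ 3 - ‖x‖ ^ 3) * p i k) :=
      (hsum i).of_abs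
    have hs2 : Summable (fun k : ℕ =>
        ((3/2) * ‖x i‖ ^ 2 * ‖x‖) * ((k:ℝ) * ((k:ℝ) - 1) * p i k)) := (hmom' i).mul_left _
    have hle : ∀ k : ℕ, (‖dup i k x‖ ^ 3 - ‖x‖ ^ 3) * p i k
        ≤ ((3/2) * ‖x i‖ ^ 2 * ‖x‖) * ((k:ℝ) * ((k:ℝ) - 1) * p i k) := by
      intro k
      calc (‖dup i k x‖ ^ 3 - ‖x‖ ^ 3) * p i k
          ≤ ((3/2) * ((k:ℝ) * ((k:ℝ) - 1)) * ‖x i‖ ^ 2 * ‖x‖) * p i k :=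
            mul_le_mul_of_nonneg_right (dup_cube_upper hm i k x) (hp i k)
        _ = ((3/2) * ‖x i‖ ^ 2 * ‖x‖) * ((k:ℝ) * ((k:ℝ) - 1) * p i k) := by ring
    calc ∑' k, (‖dup i k x‖ ^ 3 - ‖x‖ ^ 3) * p i k
        ≤ ∑' k : ℕ, ((3/2) * ‖x i‖ ^ 2 * ‖x‖) * ((k:ℝ) * ((k:ℝ) - 1) * p i k) :=
          Summable.tsum_le_tsum hle hs1 hs2
      _ = ((3/2) * ‖x i‖ ^ 2 * ‖x‖) * ∑' k : ℕ, (k:ℝ) * ((k:ℝ) - 1) * p i k := tsum_mul_left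
      _ ≤ ((3/2) * ‖x i‖ ^ 2 * ‖x‖) * C2 := by
          apply mul_le_mul_of_nonneg_left (hmom2 i); positivity
      _ = (3/2) * C2 * ‖x i‖ ^ 2 * ‖x‖ := by ring
  have hterm : ∀ i : Fin m, γ i * ∑' k, (‖dup i k x‖ ^ 3 - ‖x‖ ^ 3) * p i k
      ≤ Cγ * ((3/2) * C2 * ‖x i‖ ^ 2 * ‖x‖) := by
    intro i
    obtain ⟨hγ0, hγC⟩ := hγ i
    have hB : (0:ℝ) ≤ (3/2) * C2 * ‖x i‖ ^ 2 * ‖x‖ := by positivity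
    rcases le_or_gt (∑' k, (‖dup i k x‖ ^ 3 - ‖x‖ ^ 3) * p i k) 0 with hS | hS
    · have : γ i * ∑' k, (‖dup i k x‖ ^ 3 - ‖x‖ ^ 3) * p i k ≤ 0 :=
        mul_nonpos_of_nonneg_of_nonpos hγ0 hS
      have : (0:ℝ) ≤ Cγ * ((3/2) * C2 * ‖x i‖ ^ 2 * ‖x‖) := mul_nonneg hCγ hB
      linarith
    · calc γ i * ∑' k, (‖dup i k x‖ ^ 3 - ‖x‖ ^ 3) * p i k
          ≤ Cγ * ∑' k, (‖dup i k x‖ ^ 3 - ‖x‖ ^ 3) * p i k :=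
            mul_le_mul_of_nonneg_right hγC hS.le
        _ ≤ Cγ * ((3/2) * C2 * ‖x i‖ ^ 2 * ‖x‖) :=
            mul_le_mul_of_nonneg_left (hSle i) hCγ
  have hsum2 : ∑ i, γ i * ∑' k, (‖dup i k x‖ ^ 3 - ‖x‖ ^ 3) * p i k
      ≤ (3/2) * Cγ * C2 * ‖x‖ ^ 3 := by
    calc ∑ i, γ i * ∑' k, (‖dup i k x‖ ^ 3 - ‖x‖ ^ 3) * p i k
        ≤ ∑ i, Cγ * ((3/2) * C2 * ‖x i‖ ^ 2 * ‖x‖) :=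
          Finset.sum_le_sum fun i _ => hterm i
      _ = (Cγ * ((3/2) * C2 * ‖x‖)) * ∑ i, ‖x i‖ ^ 2 := by
          rw [Finset.mul_sum]; exact Finset.sum_congr rfl fun i _ => by ring
      _ = (Cγ * ((3/2) * C2 * ‖x‖)) * ‖x‖ ^ 2 := by
          rw [← PiLp.norm_sq_eq_of_L2]
      _ = (3/2) * Cγ * C2 * ‖x‖ ^ 3 := by ring
  have hfin : (3/2) * Cγ * C2 * ‖x‖ ^ 3
      ≤ (3 / 2 : ℝ) * Cγ * ((C1 / 2) * Real.sqrt m + C2) * ‖x‖ ^ 3 := by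
    have h1 : (0:ℝ) ≤ Real.sqrt m := Real.sqrt_nonneg _
    have h2 : (0:ℝ) ≤ ‖x‖ ^ 3 := by positivity
    nlinarith [mul_nonneg (mul_nonneg hCγ hC1) h1]
  linarith
end
end
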